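/- Let N be a fully resolved tree-child time consistent phylogenetic network on taxa S, and suppose there is a hybrid node A whose only child is a tree leaf i, with parents v1 and v2 of A whose other children are tree leaves j1 and j2 respectively. Then L_N(i,j1) = L_N(i,j2) = 3, L_N(j1,j2) ≥ 4, and if L_N(j1,j2) = 4 then L_N(j1,k) = L_N(j2,k) for every leaf k ∈ S \ {i,j1,j2}. -/

import Mathlib

open Classical

/-- A walk (path) in a digraph: a nonempty list of vertices with consecutive arcs. -/
def IsWalk {V : Type} (E : V → V → Prop) (p : List V) : Prop := p ≠ [] ∧ p.Chain' E

/-- A path with origin `u` and end `v`. -/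
def WalkFromTo {V : Type} (E : V → V → Prop) (u v : V) (p : List V) : Prop :=
  IsWalk E p ∧ p.head? = some u ∧ p.getLast? = some v

/-- `v` is a descendant of `u` (possibly trivial path from `u` to `v`). -/
def Desc {V : Type} (E : V → V → Prop) (u v : V) : Prop := Relation.ReflTransGen E u v

/-- A root: a node with no incoming arcs. -/
def IsRootNode {V : Type} (E : V → V → Prop) (r : V) : Prop := ∀ u, ¬ E u r

/-- `u` is a strict ancestor of `v`: `v` is a descendant of `u` and every path
from a root to `v` contains `u`. -/
def StrictAnc {V : Type} (E : V → V → Prop) (u v : V) : Prop :=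
  Desc E u v ∧ ∀ (r : V) (p : List V), IsRootNode E r → WalkFromTo E r v p → u ∈ p

/-- In-degree. -/
noncomputable def indeg {V : Type} (E : V → V → Prop) (v : V) : ℕ := {u | E u v}.ncard
/-- Out-degree. -/
noncomputable def outdeg {V : Type} (E : V → V → Prop) (v : V) : ℕ := {w | E v w}.ncard

/-- Tree node: in-degree at most 1. -/
def IsTreeNode {V : Type} (E : V → V → Prop) (v : V) : Prop := indeg E v ≤ 1
/-- Hybrid node: in-degree at least 2. -/
def IsHybrid {V : Type} (E : V → V → Prop) (v : V) : Prop := 2 ≤ indeg E v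
/-- Leaf: no outgoing arcs. -/
def IsLeaf {V : Type} (E : V → V → Prop) (v : V) : Prop := ∀ w, ¬ E v w

/-- Acyclicity: no non-trivial path from a node to itself. -/
def Acyclic {V : Type} (E : V → V → Prop) : Prop := ∀ v, ¬ Relation.TransGen E v v

/-- A hybridization network: a rooted DAG whose single root has out-degree > 1. -/
structure IsHybNet {V : Type} (E : V → V → Prop) (r : V) : Prop where
  acyclic : Acyclic E
  isRoot : IsRootNode E r
  uniqueRoot : ∀ x, IsRootNode E x → x = r
  rootOut : 2 ≤ outdeg E r

/-- Tree-child condition: every internal node has a tree-node child. -/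
def TreeChild {V : Type} (E : V → V → Prop) : Prop :=
  ∀ v, ¬ IsLeaf E v → ∃ w, E v w ∧ IsTreeNode E w

/-- Time consistency: a temporal representation exists. -/
def TimeConsistent {V : Type} (E : V → V → Prop) : Prop :=
  ∃ τ : V → ℕ, ∀ u v, E u v → (IsTreeNode E v → τ u < τ v) ∧ (IsHybrid E v → τ u = τ v)

/-- The leaves are bijectively labeled by `S` via `leaf`. -/
def LabelsLeaves {V S : Type} (E : V → V → Prop) (leaf : S → V) : Prop :=
  Function.Injective leaf ∧ (∀ s, IsLeaf E (leaf s)) ∧ ∀ v, IsLeaf E v → ∃ s, leaf s = v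

/-- Distance: length of a shortest path from `u` to `v`. -/
noncomputable def dist {V : Type} (E : V → V → Prop) (u v : V) : ℕ :=
  sInf {n | ∃ p, WalkFromTo E u v p ∧ p.length = n + 1}

/-- Height: largest length of a path from `v` to a leaf. -/
noncomputable def height {V : Type} (E : V → V → Prop) (v : V) : ℕ :=
  sSup {n | ∃ p w, WalkFromTo E v w p ∧ IsLeaf E w ∧ p.length = n + 1}

/-- Common ancestors of `u` and `v` that are strict ancestors of at least one of them. -/
def CSAnc {V : Type} (E : V → V → Prop) (u v : V) : Set V :=
  {x | Desc E x u ∧ Desc E x v ∧ (StrictAnc E x u ∨ StrictAnc E x v)}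

/-- `x` is a least common semi-strict ancestor of `u` and `v`. -/
def IsLCSA {V : Type} (E : V → V → Prop) (u v x : V) : Prop :=
  x ∈ CSAnc E u v ∧ ∀ y ∈ CSAnc E u v, height E x ≤ height E y

/-- The least common semi-strict ancestor `[u,v]` (the root `r` witnesses nonemptiness). -/
noncomputable def lcsa {V : Type} (E : V → V → Prop) (r u v : V) : V :=
  @Classical.epsilon V ⟨r⟩ (IsLCSA E u v)

/-- `ℓ_N(u,v)`: the distance from `[u,v]` to `u`. -/
noncomputable def ell {V : Type} (E : V → V → Prop) (r u v : V) : ℕ :=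
  dist E (lcsa E r u v) u

/-- `L_N(u,v) = ℓ_N(u,v) + ℓ_N(v,u)`: the LCSA-path length between `u` and `v`. -/
noncomputable def pathLen {V : Type} (E : V → V → Prop) (r u v : V) : ℕ :=
  ell E r u v + ell E r v u

/-- `h_N(u,v)`: −1 if `[u,v]` is a strict ancestor of `u` only, 1 if of `v` only, 0 if of both. -/
noncomputable def hval {V : Type} (E : V → V → Prop) (r u v : V) : ℤ :=
  if StrictAnc E (lcsa E r u v) u then
    (if StrictAnc E (lcsa E r u v) v then 0 else -1)
  else 1

/-- Siblings: distinct nodes sharing a parent. -/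
def Sibling {V : Type} (E : V → V → Prop) (u v : V) : Prop :=
  u ≠ v ∧ ∃ p, E p u ∧ E p v

/-- A tree path: a non-trivial path whose end and intermediate nodes are tree nodes. -/
def TreePath {V : Type} (E : V → V → Prop) (p : List V) (u v : V) : Prop :=
  WalkFromTo E u v p ∧ 2 ≤ p.length ∧ ∀ w ∈ p.tail, IsTreeNode E w

/-- `v` is a tree descendant of `u`. -/
def TreeDesc {V : Type} (E : V → V → Prop) (u v : V) : Prop := ∃ p, TreePath E p u v

/-- Quasi-binary hybridization network. -/
def QuasiBinary {V : Type} (E : V → V → Prop) : Prop :=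
  ∀ v : V, (indeg E v, outdeg E v) ∈ ({(0,2),(1,0),(1,2),(2,0),(2,1),(2,2)} : Set (ℕ × ℕ))

/-- Fully resolved hybridization network node types. -/
def FullyResolvedHyb {V : Type} (E : V → V → Prop) : Prop :=
  ∀ v : V, (indeg E v, outdeg E v) ∈ ({(0,2),(1,0),(1,2),(2,0),(2,2)} : Set (ℕ × ℕ))

/-- Fully resolved phylogenetic network node types. -/
def FullyResolvedPhylo {V : Type} (E : V → V → Prop) : Prop :=
  ∀ v : V, (indeg E v, outdeg E v) ∈ ({(0,2),(1,0),(1,2),(2,1)} : Set (ℕ × ℕ))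

/-- Phylogenetic network condition: every hybrid node has exactly one child, a tree node. -/
def PhyloNet {V : Type} (E : V → V → Prop) : Prop :=
  ∀ v, IsHybrid E v → ∃ w, E v w ∧ IsTreeNode E w ∧ ∀ x, E v x → x = w


section Infra

variable {V : Type} {E : V → V → Prop}

lemma wft_single (E : V → V → Prop) (u : V) : WalkFromTo E u u [u] :=
  ⟨⟨by simp, List.isChain_singleton _⟩, rfl, rfl⟩

lemma wft_cons {u w v : V} {p : List V} (h : E u w) (hp : WalkFromTo E w v p) :
    WalkFromTo E u v (u :: p) := by
  obtain ⟨⟨hne, hch⟩, hh, hl⟩ := hp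
  cases p with
  | nil => simp at hh
  | cons a q =>
    simp only [List.head?_cons, Option.some.injEq] at hh; subst hh
    refine ⟨⟨by simp, List.isChain_cons_cons.2 ⟨h, hch⟩⟩, rfl, by simpa using hl⟩

lemma wft_nil {u v : V} (h : WalkFromTo E u v []) : False := h.1.1 rfl

lemma wft_cons_cases {u v a : V} {q : List V} (h : WalkFromTo E u v (a :: q)) :
    u = a ∧ ((q = [] ∧ v = a) ∨ ∃ w, E a w ∧ WalkFromTo E w v q) := by
  obtain ⟨⟨hne, hch⟩, hh, hl⟩ := h
  simp only [List.head?_cons, Option.some.injEq] at hh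
  refine ⟨hh.symm, ?_⟩
  cases q with
  | nil => left; simp_all
  | cons b q' =>
    right
    replace hch := List.isChain_cons_cons.1 hch
    exact ⟨b, hch.1, ⟨by simp, hch.2⟩, rfl, by simpa using hl⟩

lemma wft_head_mem {u v : V} {p : List V} (h : WalkFromTo E u v p) : u ∈ p := by
  cases p with
  | nil => exact absurd rfl h.1.1
  | cons a q => rw [(wft_cons_cases h).1]; simp

lemma wft_last_mem {u v : V} {p : List V} (h : WalkFromTo E u v p) : v ∈ p := by
  induction p generalizing u with
  | nil => exact absurd rfl h.1.1
  | cons a q ih =>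
    obtain ⟨rfl, h2 | ⟨w, hw, h3⟩⟩ := wft_cons_cases h
    · simp [h2.2]
    · exact List.mem_cons_of_mem _ (ih h3)

lemma wft_snoc {u w v : V} {q : List V} (h : WalkFromTo E u w q) (hv : E w v) :
    WalkFromTo E u v (q ++ [v]) := by
  induction q generalizing u with
  | nil => exact absurd rfl h.1.1
  | cons a q' ih =>
    obtain ⟨rfl, ⟨rfl, rfl⟩ | ⟨w', hw', h3⟩⟩ := wft_cons_cases h
    · exact wft_cons hv (wft_single E v)
    · exact wft_cons hw' (ih h3)

lemma wft_snoc_cases {u v : V} {p : List V} (h : WalkFromTo E u v p) :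
    (p = [u] ∧ v = u) ∨ ∃ w q, p = q ++ [v] ∧ WalkFromTo E u w q ∧ E w v := by
  induction p generalizing u with
  | nil => exact absurd rfl h.1.1
  | cons a q ih =>
    obtain ⟨rfl, ⟨rfl, rfl⟩ | ⟨w, hw, h3⟩⟩ := wft_cons_cases h
    · exact Or.inl ⟨rfl, rfl⟩
    · right
      rcases ih h3 with ⟨rfl, rfl⟩ | ⟨w', q'', rfl, h5, h6⟩
      · exact ⟨u, [u], rfl, wft_single E u, hw⟩
      · exact ⟨w', u :: q'', rfl, wft_cons hw h5, h6⟩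

lemma wft_append {u v w : V} {p q : List V}
    (hp : WalkFromTo E u v p) (hq : WalkFromTo E v w q) :
    WalkFromTo E u w (p ++ q.tail) := by
  induction p generalizing u with
  | nil => exact absurd rfl hp.1.1
  | cons a p' ih =>
    obtain ⟨rfl, ⟨rfl, rfl⟩ | ⟨w', hw', h3⟩⟩ := wft_cons_cases hp
    · cases q with
      | nil => exact absurd rfl hq.1.1
      | cons b q' =>
        obtain ⟨rfl, _⟩ := wft_cons_cases hq
        simpa using hq
    · simpa using wft_cons hw' (ih h3)

lemma desc_of_wft {u v : V} {p : List V} (h : WalkFromTo E u v p) : Desc E u v := by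
  induction p generalizing u with
  | nil => exact absurd rfl h.1.1
  | cons a p' ih =>
    obtain ⟨rfl, ⟨rfl, rfl⟩ | ⟨w, hw, h3⟩⟩ := wft_cons_cases h
    · exact Relation.ReflTransGen.refl
    · exact Relation.ReflTransGen.head hw (ih h3)

lemma wft_of_desc {u v : V} (h : Desc E u v) : ∃ p, WalkFromTo E u v p := by
  induction h using Relation.ReflTransGen.head_induction_on with
  | refl => exact ⟨[v], wft_single E v⟩
  | head hab _ ih => obtain ⟨p, hp⟩ := ih; exact ⟨_, wft_cons hab hp⟩

lemma wft_of_transGen {u v : V} (h : Relation.TransGen E u v) :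
    ∃ p, WalkFromTo E u v p ∧ 2 ≤ p.length := by
  obtain ⟨w, hw, hwv⟩ := Relation.TransGen.head'_iff.1 h
  obtain ⟨p, hp⟩ := wft_of_desc hwv
  refine ⟨u :: p, wft_cons hw hp, ?_⟩
  have := hp.1.1
  cases p <;> simp_all

lemma wft_length_pos {u v : V} {p : List V} (h : WalkFromTo E u v p) : 1 ≤ p.length := by
  have := h.1.1; cases p <;> simp_all

lemma wft_length_one {u v : V} {p : List V} (h : WalkFromTo E u v p)
    (hl : p.length = 1) : v = u := by
  cases p with
  | nil => exact absurd rfl h.1.1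
  | cons a q =>
    simp at hl
    obtain ⟨rfl, h2 | ⟨w, hw, h3⟩⟩ := wft_cons_cases h
    · exact h2.2
    · rw [hl] at h3; exact absurd rfl h3.1.1

lemma wft_length_two {u v : V} {p : List V} (h : WalkFromTo E u v p)
    (hl : p.length = 2) : E u v := by
  cases p with
  | nil => exact absurd rfl h.1.1
  | cons a q =>
    simp at hl
    obtain ⟨rfl, ⟨rfl, rfl⟩ | ⟨w, hw, h3⟩⟩ := wft_cons_cases h
    · simp at hl
    · rwa [← wft_length_one h3 hl] at hw

lemma chain'_transGen {a b : V} {q : List V} (hch : List.Chain' E (a :: q)) (hb : b ∈ q) :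
    Relation.TransGen E a b := by
  induction q generalizing a with
  | nil => simp at hb
  | cons c q' ih =>
    replace hch := List.isChain_cons_cons.1 hch
    rcases List.mem_cons.1 hb with rfl | hb'
    · exact Relation.TransGen.single hch.1
    · exact Relation.TransGen.head hch.1 (ih hch.2 hb')

lemma walk_nodup (hac : Acyclic E) {p : List V} (hch : List.Chain' E p) : p.Nodup := by
  induction p with
  | nil => exact List.nodup_nil
  | cons a q ih =>
    refine List.nodup_cons.2 ⟨fun ha => hac a (chain'_transGen hch ha), ih hch.tail⟩

lemma wft_length_le [Fintype V] (hac : Acyclic E) {u v : V} {p : List V}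
    (h : WalkFromTo E u v p) : p.length ≤ Fintype.card V :=
  (walk_nodup hac h.1.2).length_le_card

lemma height_bddAbove [Fintype V] (hac : Acyclic E) (v : V) :
    BddAbove {n | ∃ p w, WalkFromTo E v w p ∧ IsLeaf E w ∧ p.length = n + 1} := by
  refine ⟨Fintype.card V, fun n hn => ?_⟩
  obtain ⟨p, w, hp, _, hl⟩ := hn
  have := wft_length_le hac hp
  omega

lemma heightSet_shift {u v : V} {q : List V} (hq : WalkFromTo E u v q) {n : ℕ}
    (hn : n ∈ {n | ∃ p w, WalkFromTo E v w p ∧ IsLeaf E w ∧ p.length = n + 1}) :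
    (q.length + n - 1) ∈ {n | ∃ p w, WalkFromTo E u w p ∧ IsLeaf E w ∧ p.length = n + 1} := by
  obtain ⟨p, w, hp, hw, hl⟩ := hn
  have hq1 := wft_length_pos hq
  refine ⟨q ++ p.tail, w, wft_append hq hp, hw, ?_⟩
  have hp1 : p.tail.length = n := by
    have : p.length - 1 = n := by omega
    simpa using this
  rw [List.length_append, hp1]
  omega

lemma heightSet_nonempty {v w : V} (hvw : Desc E v w) (hw : IsLeaf E w) :
    Set.Nonempty {n | ∃ p w, WalkFromTo E v w p ∧ IsLeaf E w ∧ p.length = n + 1} := by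
  obtain ⟨p, hp⟩ := wft_of_desc hvw
  have hq1 := wft_length_pos hp
  exact ⟨p.length - 1, p, w, hp, hw, by omega⟩

lemma height_le_of_desc [Fintype V] (hac : Acyclic E) {u v : V} (h : Desc E u v) :
    height E v ≤ height E u := by
  unfold height
  rcases Set.eq_empty_or_nonempty
      {n | ∃ p w, WalkFromTo E v w p ∧ IsLeaf E w ∧ p.length = n + 1} with he | hne
  · rw [he]; simp
  · have hmem := Nat.sSup_mem hne (height_bddAbove hac v)
    obtain ⟨q, hq⟩ := wft_of_desc h
    have hq1 := wft_length_pos hq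
    have h3 := le_csSup (height_bddAbove hac u) (heightSet_shift hq hmem)
    omega

lemma height_lt [Fintype V] (hac : Acyclic E) {u v w : V} (h : Relation.TransGen E u v)
    (hvw : Desc E v w) (hw : IsLeaf E w) : height E v < height E u := by
  unfold height
  have hne := heightSet_nonempty hvw hw
  have hmem := Nat.sSup_mem hne (height_bddAbove hac v)
  obtain ⟨q, hq, hq2⟩ := wft_of_transGen h
  have h3 := le_csSup (height_bddAbove hac u) (heightSet_shift hq hmem)
  omega

end Infra

set_option linter.unusedSectionVars false

section Net

variable {V : Type} [Fintype V] {E : V → V → Prop} {r : V}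

lemma dist_le {u v : V} {p : List V} (h : WalkFromTo E u v p) {n : ℕ}
    (hl : p.length = n + 1) : dist E u v ≤ n := Nat.sInf_le ⟨p, h, hl⟩

lemma dist_spec {u v : V} (h : Desc E u v) :
    ∃ p, WalkFromTo E u v p ∧ p.length = dist E u v + 1 := by
  have hne : {n | ∃ p, WalkFromTo E u v p ∧ p.length = n + 1}.Nonempty := by
    obtain ⟨p, hp⟩ := wft_of_desc h
    exact ⟨p.length - 1, p, hp, by have := wft_length_pos hp; omega⟩
  exact Nat.sInf_mem hne

lemma ne_of_edge (hac : Acyclic E) {u v : V} (h : E u v) : u ≠ v :=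
  fun he => hac v (Relation.TransGen.single (he ▸ h))

lemma transGen_of_ne {u v : V} (h : Desc E u v) (hne : u ≠ v) : Relation.TransGen E u v := by
  rcases Relation.ReflTransGen.cases_head h with rfl | ⟨c, hc, hcv⟩
  · exact absurd rfl hne
  · exact Relation.TransGen.head' hc hcv

lemma desc_leaf {v z : V} (hv : IsLeaf E v) (h : Desc E v z) : z = v := by
  rcases Relation.ReflTransGen.cases_head h with rfl | ⟨w, hw, _⟩
  · rfl
  · exact absurd hw (hv w)

lemma parent_unique {v p : V} (ht : IsTreeNode E v) (h1 : E p v) : ∀ x, E x v → x = p := by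
  intro x hx
  by_contra hne
  have h2 : 1 < indeg E v :=
    (Set.one_lt_ncard (Set.toFinite _)).2 ⟨x, hx, p, h1, hne⟩
  have h3 : indeg E v ≤ 1 := ht
  omega

lemma desc_to_parent {x z p : V} (h : Desc E x z) (hne : x ≠ z)
    (hp : ∀ y, E y z → y = p) : Desc E x p := by
  rcases Relation.ReflTransGen.cases_tail h with rfl | ⟨c, hc1, hc2⟩
  · exact absurd rfl hne
  · exact (hp c hc2) ▸ hc1

lemma children_eq (hfr : FullyResolvedPhylo E) {v a b : V}
    (ha : E v a) (hb : E v b) (hab : a ≠ b) :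
    (∀ w, E v w → w = a ∨ w = b) ∧ IsTreeNode E v := by
  have hsub : ({a, b} : Set V) ⊆ {w | E v w} := by
    intro x hx; rcases hx with rfl | hx
    · exact ha
    · rw [Set.mem_singleton_iff] at hx; exact hx ▸ hb
  have h2 : 2 ≤ outdeg E v := by
    have := Set.ncard_le_ncard hsub (Set.toFinite _)
    rwa [Set.ncard_pair hab] at this
  have hv := hfr v
  simp only [Set.mem_insert_iff, Set.mem_singleton_iff, Prod.mk.injEq] at hv
  have hout : outdeg E v = 2 ∧ indeg E v ≤ 1 := by
    rcases hv with ⟨h3, h4⟩ | ⟨h3, h4⟩ | ⟨h3, h4⟩ | ⟨h3, h4⟩ <;> omega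
  constructor
  · intro w hw
    by_contra hc
    push_neg at hc
    have h3 : 2 < outdeg E v :=
      (Set.two_lt_ncard (Set.toFinite _)).2 ⟨w, hw, a, ha, b, hb, hc.1, hc.2, hab⟩
    omega
  · exact hout.2

lemma root_desc (hnet : IsHybNet E r) (v : V) : Desc E r v := by
  haveI : IsIrrefl V (Relation.TransGen E) := ⟨hnet.acyclic⟩
  have wf : WellFounded (Relation.TransGen E) :=
    Finite.wellFounded_of_trans_of_irrefl (Relation.TransGen E)
  induction v using wf.induction with
  | _ v ih =>
    by_cases hv : v = r
    · exact hv ▸ Relation.ReflTransGen.refl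
    · have hnr : ¬ IsRootNode E v := fun h => hv (hnet.uniqueRoot v h)
      have hex : ∃ u, E u v := by
        by_contra hc
        push_neg at hc
        exact hnr hc
      obtain ⟨u, hu⟩ := hex
      exact (ih u (Relation.TransGen.single hu)).tail hu

lemma strictAnc_root (hnet : IsHybNet E r) (v : V) : StrictAnc E r v :=
  ⟨root_desc hnet v, fun r' p hr' hp => by
    have h := hnet.uniqueRoot r' hr'
    subst h
    exact wft_head_mem hp⟩

lemma root_mem_CSA (hnet : IsHybNet E r) (u v : V) : r ∈ CSAnc E u v :=
  ⟨root_desc hnet u, root_desc hnet v, Or.inl (strictAnc_root hnet u)⟩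

lemma exists_isLCSA (hnet : IsHybNet E r) (u v : V) : ∃ x, IsLCSA E u v x := by
  have hne : (height E '' CSAnc E u v).Nonempty := ⟨_, r, root_mem_CSA hnet u v, rfl⟩
  obtain ⟨x, hx, hhx⟩ := Nat.sInf_mem hne
  exact ⟨x, hx, fun y hy => hhx ▸ Nat.sInf_le ⟨y, hy, rfl⟩⟩

lemma lcsa_isLCSA (hnet : IsHybNet E r) (u v : V) : IsLCSA E u v (lcsa E r u v) :=
  Classical.epsilon_spec (exists_isLCSA hnet u v)

lemma lcsa_eq_of_unique {u v x : V} (h1 : IsLCSA E u v x)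
    (h2 : ∀ y, IsLCSA E u v y → y = x) : lcsa E r u v = x :=
  h2 _ (Classical.epsilon_spec ⟨x, h1⟩)

lemma CSA_symm (E : V → V → Prop) (u v : V) : CSAnc E u v = CSAnc E v u :=
  Set.ext fun x => ⟨fun ⟨a, b, c⟩ => ⟨b, a, c.symm⟩, fun ⟨a, b, c⟩ => ⟨b, a, c.symm⟩⟩

lemma isLCSA_symm (E : V → V → Prop) (u v : V) : IsLCSA E u v = IsLCSA E v u := by
  funext x
  unfold IsLCSA
  rw [CSA_symm E u v]

lemma lcsa_symm (E : V → V → Prop) (r u v : V) : lcsa E r u v = lcsa E r v u := by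
  unfold lcsa
  rw [isLCSA_symm E u v]

/-- If `E x v`, `E v j`, `j` a leaf with unique parent `v`, `v` with unique parent `x`,
then for `y` an ancestor of `x`, strict ancestry of `j` and of `x` coincide. -/
lemma sa_lift (hac : Acyclic E) {x v j y : V} (hxv : E x v) (hvj : E v j)
    (hjleaf : IsLeaf E j) (vparent : ∀ z, E z v → z = x) (jparent : ∀ z, E z j → z = v)
    (hyx : Desc E y x) : StrictAnc E y j ↔ StrictAnc E y x := by
  constructor
  · rintro ⟨hd, hall⟩
    refine ⟨hyx, fun r' p hr' hp => ?_⟩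
    have hp2 := wft_snoc (wft_snoc hp hxv) hvj
    have hy := hall r' _ hr' hp2
    simp only [List.mem_append, List.mem_singleton] at hy
    rcases hy with (hmem | rfl) | rfl
    · exact hmem
    · exact absurd (Relation.TransGen.tail' hyx hxv) (hac y)
    · have hxy : x = y := desc_leaf hjleaf hyx
      exact absurd (hxy ▸ hxv) (hjleaf v)
  · rintro ⟨hd, hall⟩
    refine ⟨hyx.trans (Relation.ReflTransGen.head hxv (Relation.ReflTransGen.single hvj)),
      fun r' p hr' hp => ?_⟩
    rcases wft_snoc_cases hp with ⟨rfl, rfl⟩ | ⟨w, q, rfl, hq, hwj⟩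
    · exact absurd hvj (hr' v)
    · have hw := jparent w hwj; subst hw
      rcases wft_snoc_cases hq with ⟨rfl, rfl⟩ | ⟨w', q', rfl, hq', hwv⟩
      · exact absurd hxv (hr' x)
      · have hw' := vparent w' hwv; subst hw'
        have := hall r' q' hr' hq'
        simp [List.mem_append, this]

/-- Under the same pattern, distance from an ancestor `z` of `x` to `j` is `dist z x + 2`. -/
lemma dist_through (hac : Acyclic E) {x v j z : V} (hxv : E x v) (hvj : E v j)
    (hjleaf : IsLeaf E j) (vparent : ∀ w, E w v → w = x) (jparent : ∀ w, E w j → w = v)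
    (hzx : Desc E z x) : dist E z j = dist E z x + 2 := by
  obtain ⟨q, hq, hql⟩ := dist_spec hzx
  have hle : dist E z j ≤ dist E z x + 2 := by
    refine dist_le (wft_snoc (wft_snoc hq hxv) hvj) ?_
    simp only [List.length_append, List.length_singleton, hql]
    all_goals omega
  have hge : dist E z x + 2 ≤ dist E z j := by
    have hdzj : Desc E z j :=
      hzx.trans (Relation.ReflTransGen.head hxv (Relation.ReflTransGen.single hvj))
    obtain ⟨p, hp, hpl⟩ := dist_spec hdzj
    rcases wft_snoc_cases hp with ⟨rfl, rfl⟩ | ⟨w, q2, rfl, hq2, hwj⟩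
    · have hxj : x = j := desc_leaf hjleaf hzx
      exact absurd (hxj ▸ hxv) (hjleaf v)
    · have hw := jparent w hwj
      rw [hw] at hq2
      rcases wft_snoc_cases hq2 with ⟨h1, h2⟩ | ⟨w', q', rfl, hq', hwv⟩
      · exact absurd (Relation.TransGen.tail' (h2.symm ▸ hzx) hxv) (hac v)
      · have hw' := vparent w' hwv
        rw [hw'] at hq'
        have hq'pos := wft_length_pos hq'
        have hlen : q'.length = (q'.length - 1) + 1 := by omega
        have := dist_le hq' hlen
        simp only [List.length_append, List.length_singleton] at hpl
        omega
  omega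

/-- `L_N(i,j) = 3` for the parent pattern `v → A → i`, `v → j`. -/
lemma pathLen_eq_three (hac : Acyclic E) (hfr : FullyResolvedPhylo E)
    {A v i j : V} (hAi : E A i) (hileaf : IsLeaf E i) (hitree : IsTreeNode E i)
    (hvA : E v A) (hvj : E v j) (hjleaf : IsLeaf E j) (hjtree : IsTreeNode E j) :
    pathLen E r i j = 3 := by
  have hAj : A ≠ j := fun h => hjleaf i (h ▸ hAi)
  have iparent := parent_unique hitree hAi
  have jparent := parent_unique hjtree hvj
  have hij : i ≠ j := by
    intro h
    exact ne_of_edge hac hvA (iparent v (h ▸ hvj))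
  have hch := (children_eq hfr hvA hvj hAj).1
  have hdvi : Desc E v i :=
    Relation.ReflTransGen.head hvA (Relation.ReflTransGen.single hAi)
  have hdvj : Desc E v j := Relation.ReflTransGen.single hvj
  have hCSAv : v ∈ CSAnc E i j := by
    refine ⟨hdvi, hdvj, Or.inr ⟨hdvj, fun r' p hr' hp => ?_⟩⟩
    rcases wft_snoc_cases hp with ⟨rfl, rfl⟩ | ⟨w, q, rfl, hq, hwj⟩
    · exact absurd hvj (hr' v)
    · have hw := jparent w hwj; subst hw
      exact List.mem_append_left _ (wft_last_mem hq)
  have hanc : ∀ y, y ∈ CSAnc E i j → Desc E y v := by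
    rintro y ⟨hyi, hyj, -⟩
    have hyne : y ≠ j := by
      rintro rfl
      exact hij (desc_leaf hjleaf hyi)
    exact desc_to_parent hyj hyne jparent
  have hIs : IsLCSA E i j v :=
    ⟨hCSAv, fun y hy => height_le_of_desc hac (hanc y hy)⟩
  have huniq : ∀ y, IsLCSA E i j y → y = v := by
    intro y hy
    by_contra hne
    have h1 : height E y ≤ height E v := hy.2 v hCSAv
    have h2 : height E v < height E y :=
      height_lt hac (transGen_of_ne (hanc y hy.1) hne) hdvj hjleaf
    omega
  have hlcsa1 : lcsa E r i j = v := lcsa_eq_of_unique hIs huniq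
  have hlcsa2 : lcsa E r j i = v := by rw [lcsa_symm]; exact hlcsa1
  have hdvi2 : dist E v i = 2 := by
    have hle : dist E v i ≤ 2 :=
      dist_le (wft_cons hvA (wft_cons hAi (wft_single E i))) (by simp)
    obtain ⟨p, hp, hpl⟩ := dist_spec hdvi
    have hne0 : dist E v i ≠ 0 := by
      intro h0
      rw [h0] at hpl
      have := wft_length_one hp hpl
      exact hileaf A (this ▸ hvA)
    have hne1 : dist E v i ≠ 1 := by
      intro h1
      rw [h1] at hpl
      have := wft_length_two hp hpl
      exact ne_of_edge hac hvA (iparent v this)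
    omega
  have hdvj1 : dist E v j = 1 := by
    have hle : dist E v j ≤ 1 := dist_le (wft_cons hvj (wft_single E j)) (by simp)
    obtain ⟨p, hp, hpl⟩ := dist_spec hdvj
    have hne0 : dist E v j ≠ 0 := by
      intro h0
      rw [h0] at hpl
      have := wft_length_one hp hpl
      exact hjleaf A (this ▸ hvA)
    omega
  unfold pathLen ell
  rw [hlcsa1, hlcsa2, hdvi2, hdvj1]

end Net

/-- In a fully resolved TCTC phylogenetic network, if a hybrid node `A` has
only child the tree leaf `i` and its parents `v1, v2` have other children the tree leaves
`j1, j2`, then `L_N(i,j1) = L_N(i,j2) = 3`, `L_N(j1,j2) ≥ 4`, and if `L_N(j1,j2) = 4` then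
`L_N(j1,k) = L_N(j2,k)` for every other leaf `k`. -/
theorem stmt18 {V : Type} [Fintype V] (E : V → V → Prop) (r : V)
    (hnet : IsHybNet E r) (hph : PhyloNet E) (hfr : FullyResolvedPhylo E)
    (htc : TreeChild E) (hti : TimeConsistent E)
    (A v1 v2 i j1 j2 : V)
    (hA : IsHybrid E A) (hAi : E A i) (hAonly : ∀ w, E A w → w = i)
    (hileaf : IsLeaf E i) (hitree : IsTreeNode E i)
    (hne : v1 ≠ v2) (hv1A : E v1 A) (hv2A : E v2 A)
    (hparents : ∀ x, E x A → x = v1 ∨ x = v2)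
    (hv1j1 : E v1 j1) (hv2j2 : E v2 j2)
    (hj1leaf : IsLeaf E j1) (hj1tree : IsTreeNode E j1)
    (hj2leaf : IsLeaf E j2) (hj2tree : IsTreeNode E j2) :
    pathLen E r i j1 = 3 ∧ pathLen E r i j2 = 3 ∧ 4 ≤ pathLen E r j1 j2 ∧
      (pathLen E r j1 j2 = 4 →
        ∀ k, IsLeaf E k → k ≠ i → k ≠ j1 → k ≠ j2 →
          pathLen E r j1 k = pathLen E r j2 k) := by
  have hac := hnet.acyclic
  have iparent := parent_unique hitree hAi
  have j1parent := parent_unique hj1tree hv1j1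
  have j2parent := parent_unique hj2tree hv2j2
  have hAj1 : A ≠ j1 := fun h => hj1leaf i (by rw [← h]; exact hAi)
  have hAj2 : A ≠ j2 := fun h => hj2leaf i (by rw [← h]; exact hAi)
  have hij1 : i ≠ j1 := fun h =>
    ne_of_edge hac hv1A (iparent v1 (by rw [h]; exact hv1j1))
  have hij2 : i ≠ j2 := fun h =>
    ne_of_edge hac hv2A (iparent v2 (by rw [h]; exact hv2j2))
  have hj12 : j1 ≠ j2 := fun h =>
    hne (j1parent v2 (by rw [h]; exact hv2j2)).symm
  have hch1 := (children_eq hfr hv1A hv1j1 hAj1).1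
  have hch2 := (children_eq hfr hv2A hv2j2 hAj2).1
  have hdesc1 : ∀ z, Desc E v1 z → z = v1 ∨ z = A ∨ z = j1 ∨ z = i := by
    intro z h
    induction h with
    | refl => exact Or.inl rfl
    | tail _ hbc ih =>
      rcases ih with rfl | rfl | rfl | rfl
      · rcases hch1 _ hbc with rfl | rfl
        · exact Or.inr (Or.inl rfl)
        · exact Or.inr (Or.inr (Or.inl rfl))
      · exact Or.inr (Or.inr (Or.inr (hAonly _ hbc)))
      · exact absurd hbc (hj1leaf _)
      · exact absurd hbc (hileaf _)
  have hdesc2 : ∀ z, Desc E v2 z → z = v2 ∨ z = A ∨ z = j2 ∨ z = i := by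
    intro z h
    induction h with
    | refl => exact Or.inl rfl
    | tail _ hbc ih =>
      rcases ih with rfl | rfl | rfl | rfl
      · rcases hch2 _ hbc with rfl | rfl
        · exact Or.inr (Or.inl rfl)
        · exact Or.inr (Or.inr (Or.inl rfl))
      · exact Or.inr (Or.inr (Or.inr (hAonly _ hbc)))
      · exact absurd hbc (hj2leaf _)
      · exact absurd hbc (hileaf _)
  have hP1 : pathLen E r i j1 = 3 :=
    pathLen_eq_three hac hfr hAi hileaf hitree hv1A hv1j1 hj1leaf hj1tree
  have hP2 : pathLen E r i j2 = 3 :=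
    pathLen_eq_three hac hfr hAi hileaf hitree hv2A hv2j2 hj2leaf hj2tree
  -- the LCSA of j1 and j2
  set x := lcsa E r j1 j2 with hxdef
  have hxIs := lcsa_isLCSA hnet j1 j2
  obtain ⟨⟨hdx1, hdx2, -⟩, -⟩ := hxIs
  have hxj1 : x ≠ j1 := fun h => hj12 (desc_leaf hj1leaf (by rw [← h]; exact hdx2)).symm
  have hxj2 : x ≠ j2 := fun h => hj12 (desc_leaf hj2leaf (by rw [← h]; exact hdx1))
  have hdxv1 : Desc E x v1 := desc_to_parent hdx1 hxj1 j1parent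
  have hdxv2 : Desc E x v2 := desc_to_parent hdx2 hxj2 j2parent
  have hxv1 : x ≠ v1 := by
    intro h
    rcases hdesc1 j2 (by rw [← h]; exact hdx2) with h2 | h2 | h2 | h2
    · exact hj2leaf A (by rw [h2]; exact hv1A)
    · exact hj2leaf i (by rw [h2]; exact hAi)
    · exact hj12 h2.symm
    · exact hij2 h2.symm
  have hxv2 : x ≠ v2 := by
    intro h
    rcases hdesc2 j1 (by rw [← h]; exact hdx1) with h2 | h2 | h2 | h2
    · exact hj1leaf A (by rw [h2]; exact hv2A)
    · exact hj1leaf i (by rw [h2]; exact hAi)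
    · exact hj12 h2
    · exact hij1 h2.symm
  have hell : pathLen E r j1 j2 = dist E x j1 + dist E x j2 := by
    unfold pathLen ell
    rw [lcsa_symm E r j2 j1, ← hxdef]
  have hd1ge : 2 ≤ dist E x j1 := by
    obtain ⟨p, hp, hpl⟩ := dist_spec hdx1
    have h0 : dist E x j1 ≠ 0 := by
      intro h
      rw [h] at hpl
      exact hxj1 (wft_length_one hp hpl).symm
    have h1 : dist E x j1 ≠ 1 := by
      intro h
      rw [h] at hpl
      exact hxv1 (j1parent x (wft_length_two hp hpl))
    omega
  have hd2ge : 2 ≤ dist E x j2 := by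
    obtain ⟨p, hp, hpl⟩ := dist_spec hdx2
    have h0 : dist E x j2 ≠ 0 := by
      intro h
      rw [h] at hpl
      exact hxj2 (wft_length_one hp hpl).symm
    have h1 : dist E x j2 ≠ 1 := by
      intro h
      rw [h] at hpl
      exact hxv2 (j2parent x (wft_length_two hp hpl))
    omega
  refine ⟨hP1, hP2, by rw [hell]; omega, ?_⟩
  intro hL4 k hkleaf hki hkj1 hkj2
  rw [hell] at hL4
  have hd1e : dist E x j1 = 2 := by omega
  have hd2e : dist E x j2 = 2 := by omega
  have hExv1 : E x v1 := by
    obtain ⟨p, hp, hpl⟩ := dist_spec hdx1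
    rw [hd1e] at hpl
    rcases wft_snoc_cases hp with ⟨h1, h2⟩ | ⟨w, q, rfl, hq, hwj⟩
    · rw [h1] at hpl; simp at hpl
    · have hw := j1parent w hwj
      rw [hw] at hq
      refine wft_length_two hq ?_
      simp only [List.length_append, List.length_singleton] at hpl
      omega
  have hExv2 : E x v2 := by
    obtain ⟨p, hp, hpl⟩ := dist_spec hdx2
    rw [hd2e] at hpl
    rcases wft_snoc_cases hp with ⟨h1, h2⟩ | ⟨w, q, rfl, hq, hwj⟩
    · rw [h1] at hpl; simp at hpl
    · have hw := j2parent w hwj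
      rw [hw] at hq
      refine wft_length_two hq ?_
      simp only [List.length_append, List.length_singleton] at hpl
      omega
  have v1parent := parent_unique (children_eq hfr hv1A hv1j1 hAj1).2 hExv1
  have v2parent := parent_unique (children_eq hfr hv2A hv2j2 hAj2).2 hExv2
  have claimA1 : ∀ y, y ∈ CSAnc E j1 k → Desc E y x := by
    rintro y ⟨hyj1, hyk, -⟩
    have hyne : y ≠ j1 := by
      intro h
      exact hkj1 (desc_leaf hj1leaf (by rw [← h]; exact hyk))
    have hyv1 : Desc E y v1 := desc_to_parent hyj1 hyne j1parent
    have hyne2 : y ≠ v1 := by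
      intro h
      rcases hdesc1 k (by rw [← h]; exact hyk) with h2 | h2 | h2 | h2
      · exact hkleaf A (by rw [h2]; exact hv1A)
      · exact hkleaf i (by rw [h2]; exact hAi)
      · exact hkj1 h2
      · exact hki h2
    exact desc_to_parent hyv1 hyne2 v1parent
  have claimA2 : ∀ y, y ∈ CSAnc E j2 k → Desc E y x := by
    rintro y ⟨hyj2, hyk, -⟩
    have hyne : y ≠ j2 := by
      intro h
      exact hkj2 (desc_leaf hj2leaf (by rw [← h]; exact hyk))
    have hyv2 : Desc E y v2 := desc_to_parent hyj2 hyne j2parent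
    have hyne2 : y ≠ v2 := by
      intro h
      rcases hdesc2 k (by rw [← h]; exact hyk) with h2 | h2 | h2 | h2
      · exact hkleaf A (by rw [h2]; exact hv2A)
      · exact hkleaf i (by rw [h2]; exact hAi)
      · exact hkj2 h2
      · exact hki h2
    exact desc_to_parent hyv2 hyne2 v2parent
  have hsa1 := fun (y : V) (hyx : Desc E y x) =>
    sa_lift hac hExv1 hv1j1 hj1leaf v1parent j1parent hyx
  have hsa2 := fun (y : V) (hyx : Desc E y x) =>
    sa_lift hac hExv2 hv2j2 hj2leaf v2parent j2parent hyx
  have hCSAeq : CSAnc E j1 k = CSAnc E j2 k := by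
    ext y
    constructor
    · rintro ⟨h1, h2, h3⟩
      have hyx := claimA1 y ⟨h1, h2, h3⟩
      refine ⟨hyx.trans (Relation.ReflTransGen.head hExv2
        (Relation.ReflTransGen.single hv2j2)), h2, ?_⟩
      rcases h3 with h3 | h3
      · exact Or.inl ((hsa2 y hyx).2 ((hsa1 y hyx).1 h3))
      · exact Or.inr h3
    · rintro ⟨h1, h2, h3⟩
      have hyx := claimA2 y ⟨h1, h2, h3⟩
      refine ⟨hyx.trans (Relation.ReflTransGen.head hExv1
        (Relation.ReflTransGen.single hv1j1)), h2, ?_⟩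
      rcases h3 with h3 | h3
      · exact Or.inl ((hsa1 y hyx).2 ((hsa2 y hyx).1 h3))
      · exact Or.inr h3
  have hlk : lcsa E r j1 k = lcsa E r j2 k := by
    unfold lcsa
    rw [show IsLCSA E j1 k = IsLCSA E j2 k from by
      funext z; unfold IsLCSA; rw [hCSAeq]]
  have hz := lcsa_isLCSA hnet j1 k
  have hzx : Desc E (lcsa E r j1 k) x := claimA1 _ hz.1
  have hd1 : dist E (lcsa E r j1 k) j1 = dist E (lcsa E r j1 k) x + 2 :=
    dist_through hac hExv1 hv1j1 hj1leaf v1parent j1parent hzx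
  have hd2 : dist E (lcsa E r j1 k) j2 = dist E (lcsa E r j1 k) x + 2 :=
    dist_through hac hExv2 hv2j2 hj2leaf v2parent j2parent hzx
  unfold pathLen ell
  rw [lcsa_symm E r k j1, lcsa_symm E r k j2, ← hlk, hd1, hd2]
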